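/- Let p be a prime, M₁, M₂ intervals of consecutive residues mod p with |M₁|, |M₂| ≤ √p, and n ≢ 0 mod p. Using the Dirichlet kernel bound and the trivial estimate, ∑_{s≠0,−n} |sin(π|M₁|s/p)/sin(πs/p)| · |sin(π|M₂|(s+n)/p)/sin(π(s+n)/p)| ≤ p·√(|M₁|·|M₂|) ≤ p^{3/2}, where the sum is over nonzero residues s mod p with s ≠ −n. -/

import Mathlib

open Finset

namespace Stmt19Aux

open Complex

noncomputable def G (p L : ℕ) [NeZero p] (s : ZMod p) : ℂ :=
  ∑ m ∈ range L, ZMod.stdAddChar ((m : ZMod p) * s)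

lemma abs_exp_theta_sub_one (θ : ℝ) :
    ‖Complex.exp (θ * Complex.I) - 1‖ = 2 * |Real.sin (θ / 2)| := by
  rw [Complex.exp_mul_I]
  have h : Complex.cos θ + Complex.sin θ * Complex.I - 1
      = ((Real.cos θ - 1 : ℝ) : ℂ) + ((Real.sin θ : ℝ) : ℂ) * Complex.I := by
    push_cast; ring
  rw [h, Complex.norm_add_mul_I]
  have h2 := Real.sin_sq_eq_half_sub (θ / 2)
  rw [show 2 * (θ / 2) = θ by ring] at h2
  have h1 : (Real.cos θ - 1) ^ 2 + Real.sin θ ^ 2 = (2 * |Real.sin (θ / 2)|) ^ 2 := by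
    have h3 := Real.sin_sq_add_cos_sq θ
    rw [mul_pow, _root_.sq_abs]
    nlinarith
  rw [h1, Real.sqrt_sq (by positivity)]

lemma orth (p : ℕ) [NeZero p] (t : ZMod p) :
    ∑ s : ZMod p, ZMod.stdAddChar (t * s) = if t = 0 then (p : ℂ) else 0 := by
  split_ifs with h
  · simp [h, card_univ, ZMod.card]
  · exact AddChar.sum_eq_zero_of_ne_one (ZMod.isPrimitive_stdAddChar p h)

lemma conj_char (p : ℕ) [NeZero p] (x : ZMod p) :
    (starRingEnd ℂ) (ZMod.stdAddChar x) = ZMod.stdAddChar (-x) := by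
  have h1 : ZMod.stdAddChar x * ZMod.stdAddChar (-x) = 1 := by
    rw [← AddChar.map_add_eq_mul]; simp
  have h2 : ‖ZMod.stdAddChar x‖ = 1 := by
    rw [ZMod.stdAddChar_apply]; exact Circle.norm_coe _
  have h3 : (starRingEnd ℂ) (ZMod.stdAddChar x) * ZMod.stdAddChar x = 1 := by
    rw [mul_comm, Complex.mul_conj, ← Complex.sq_norm, h2]; norm_num
  have h0 : ZMod.stdAddChar x ≠ 0 := by
    intro h; rw [h] at h2; simp at h2
  rw [← h1, mul_comm (ZMod.stdAddChar x)] at h3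
  exact mul_right_cancel₀ h0 h3

lemma parseval (p L : ℕ) [NeZero p] (hL : L ≤ p) :
    ∑ s : ZMod p, ‖G p L s‖ ^ 2 = p * L := by
  have key : ∑ s : ZMod p, G p L s * (starRingEnd ℂ) (G p L s) = (p : ℂ) * L := by
    have h1 : ∀ s : ZMod p, G p L s * (starRingEnd ℂ) (G p L s)
        = ∑ m ∈ range L, ∑ m' ∈ range L,
            ZMod.stdAddChar (((m : ZMod p) - (m' : ZMod p)) * s) := by
      intro s
      rw [G, map_sum, sum_mul_sum]
      refine sum_congr rfl fun m _ => sum_congr rfl fun m' _ => ?_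
      rw [conj_char, ← AddChar.map_add_eq_mul]
      ring_nf
    simp_rw [h1]
    rw [sum_comm]
    rw [sum_congr rfl fun m _ => sum_comm (s := (univ : Finset (ZMod p))) (t := range L)]
    have h2 : ∀ m m' : ℕ, m < L → m' < L →
        (∑ s : ZMod p, ZMod.stdAddChar (((m : ZMod p) - (m' : ZMod p)) * s))
          = if m' = m then (p : ℂ) else 0 := by
      intro m m' hm hm'
      rw [orth]
      by_cases h : m' = m
      · subst h; simp
      · rw [if_neg h, if_neg]
        rw [sub_eq_zero]
        intro hc
        refine h ?_
        have := congrArg ZMod.val hc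
        rwa [ZMod.val_cast_of_lt (lt_of_lt_of_le hm hL),
          ZMod.val_cast_of_lt (lt_of_lt_of_le hm' hL), eq_comm] at this
    calc ∑ m ∈ range L, ∑ m' ∈ range L, ∑ s : ZMod p,
            ZMod.stdAddChar (((m : ZMod p) - (m' : ZMod p)) * s)
        = ∑ m ∈ range L, ∑ m' ∈ range L, if m' = m then (p : ℂ) else 0 := by
          refine sum_congr rfl fun m hm => sum_congr rfl fun m' hm' => ?_
          exact h2 m m' (mem_range.mp hm) (mem_range.mp hm')
      _ = ∑ m ∈ range L, (p : ℂ) := by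
          refine sum_congr rfl fun m hm => ?_
          rw [sum_ite_eq' (range L) m fun _ => (p : ℂ), if_pos hm]
      _ = (p : ℂ) * L := by rw [sum_const, card_range, nsmul_eq_mul, mul_comm]
  have h : ((∑ s : ZMod p, ‖G p L s‖ ^ 2 : ℝ) : ℂ)
      = ∑ s : ZMod p, G p L s * (starRingEnd ℂ) (G p L s) := by
    rw [Complex.ofReal_sum]
    refine sum_congr rfl fun s _ => ?_
    rw [Complex.sq_norm, ← Complex.mul_conj]
  exact_mod_cast h.trans key

lemma kernel_abs (p L : ℕ) [NeZero p] (s : ZMod p) (hs : s ≠ 0) :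
    ‖G p L s‖
      = |Real.sin (Real.pi * L * s.val / p) / Real.sin (Real.pi * s.val / p)| := by
  have hp : 0 < p := Nat.pos_of_ne_zero (NeZero.ne p)
  have hv : 0 < s.val := by
    rcases Nat.eq_zero_or_pos s.val with h | h
    · exact absurd (by rwa [← ZMod.val_eq_zero]) hs
    · exact h
  have hvp : s.val < p := ZMod.val_lt s
  set z : ℂ := Complex.exp (2 * Real.pi * Complex.I * s.val / p) with hz
  have hterm : ∀ m : ℕ, ZMod.stdAddChar ((m : ZMod p) * s) = z ^ m := by
    intro m
    have h1 : ((((m * s.val : ℕ) : ℤ)) : ZMod p) = (m : ZMod p) * s := by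
      push_cast [ZMod.natCast_zmod_val]
      ring
    rw [← h1, ZMod.stdAddChar_coe, ← Complex.exp_nat_mul]
    congr 1
    push_cast
    ring
  have hz1 : z ≠ 1 := by
    rw [hz, Ne, Complex.exp_eq_one_iff]
    rintro ⟨k, hk⟩
    have h2 : (2 * Real.pi * Complex.I) * ((s.val : ℂ) / p) = (2 * Real.pi * Complex.I) * k := by
      linear_combination hk
    have h3 : ((s.val : ℂ) / p) = (k : ℂ) := by
      refine mul_left_cancel₀ ?_ h2
      simp [Real.pi_ne_zero, Complex.I_ne_zero, Complex.ofReal_ne_zero]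
    rw [div_eq_iff (show (p : ℂ) ≠ 0 by exact_mod_cast hp.ne')] at h3
    have h4 : (s.val : ℤ) = k * p := by exact_mod_cast h3
    have h5 : (0 : ℤ) < s.val := by exact_mod_cast hv
    have h6 : (s.val : ℤ) < p := by exact_mod_cast hvp
    have h7 : (0 : ℤ) < p := by exact_mod_cast hp
    rcases le_or_gt k 0 with h | h
    · nlinarith
    · have : (1 : ℤ) ≤ k := h
      nlinarith
  have hG : G p L s = (z ^ L - 1) / (z - 1) := by
    rw [G]
    simp_rw [hterm]
    exact geom_sum_eq hz1 L
  have hnum : z ^ L = Complex.exp (((2 * Real.pi * L * s.val / p : ℝ) : ℂ) * Complex.I) := by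
    rw [hz, ← Complex.exp_nat_mul]
    congr 1
    push_cast
    ring
  have hden : z = Complex.exp (((2 * Real.pi * s.val / p : ℝ) : ℂ) * Complex.I) := by
    rw [hz]
    congr 1
    push_cast
    ring
  rw [hG, norm_div, hnum, hden, abs_exp_theta_sub_one, abs_exp_theta_sub_one,
    abs_div]
  rw [show (2 * Real.pi * L * s.val / p) / 2 = Real.pi * L * s.val / p by ring,
    show (2 * Real.pi * s.val / p) / 2 = Real.pi * s.val / p by ring]
  rw [mul_div_mul_left _ _ (two_ne_zero)]

end Stmt19Aux

theorem stmt19 (p : ℕ) [Fact p.Prime] (L₁ L₂ : ℕ) (hL₁ : 1 ≤ L₁) (hL₂ : 1 ≤ L₂)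
    (hL₁p : (L₁ : ℝ) ≤ Real.sqrt p) (hL₂p : (L₂ : ℝ) ≤ Real.sqrt p)
    (n : ZMod p) (hn : n ≠ 0) :
    (∑ s ∈ Finset.univ.filter (fun s : ZMod p => s ≠ 0 ∧ s ≠ -n),
        |Real.sin (Real.pi * L₁ * s.val / p) / Real.sin (Real.pi * s.val / p)| *
          |Real.sin (Real.pi * L₂ * (s + n).val / p) / Real.sin (Real.pi * (s + n).val / p)|)
      ≤ (p : ℝ) * Real.sqrt ((L₁ : ℝ) * L₂) ∧
    (p : ℝ) * Real.sqrt ((L₁ : ℝ) * L₂) ≤ (p : ℝ) ^ ((3 : ℝ) / 2) := by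
  haveI : NeZero p := ⟨(Fact.out (p := p.Prime)).ne_zero⟩
  have hp0 : 0 < p := Nat.pos_of_ne_zero (NeZero.ne p)
  have hppos : (0 : ℝ) < p := by exact_mod_cast hp0
  have hp1 : (1 : ℝ) ≤ p := by exact_mod_cast hp0
  have hsqrtp : Real.sqrt p ≤ p := by
    nlinarith [Real.sq_sqrt hppos.le, Real.sqrt_nonneg (p : ℝ)]
  have hL₁le : L₁ ≤ p := by exact_mod_cast (hL₁p.trans hsqrtp)
  have hL₂le : L₂ ≤ p := by exact_mod_cast (hL₂p.trans hsqrtp)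
  set T := Finset.univ.filter (fun s : ZMod p => s ≠ 0 ∧ s ≠ -n) with hT
  set a : ZMod p → ℝ :=
    fun s => |Real.sin (Real.pi * L₁ * s.val / p) / Real.sin (Real.pi * s.val / p)| with ha
  set b : ZMod p → ℝ :=
    fun s => |Real.sin (Real.pi * L₂ * (s + n).val / p) / Real.sin (Real.pi * (s + n).val / p)|
    with hb
  have hA : ∑ s ∈ T, a s ^ 2 ≤ (p : ℝ) * L₁ := by
    calc ∑ s ∈ T, a s ^ 2
        = ∑ s ∈ T, ‖Stmt19Aux.G p L₁ s‖ ^ 2 := by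
          refine sum_congr rfl fun s hs => ?_
          obtain ⟨hs0, -⟩ := (mem_filter.mp hs).2
          rw [ha, Stmt19Aux.kernel_abs p L₁ s hs0]
      _ ≤ ∑ s : ZMod p, ‖Stmt19Aux.G p L₁ s‖ ^ 2 :=
          sum_le_sum_of_subset_of_nonneg (subset_univ T) (fun _ _ _ => sq_nonneg _)
      _ = (p : ℝ) * L₁ := Stmt19Aux.parseval p L₁ hL₁le
  have hB : ∑ s ∈ T, b s ^ 2 ≤ (p : ℝ) * L₂ := by
    calc ∑ s ∈ T, b s ^ 2
        = ∑ s ∈ T, ‖Stmt19Aux.G p L₂ (s + n)‖ ^ 2 := by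
          refine sum_congr rfl fun s hs => ?_
          obtain ⟨-, hsn⟩ := (mem_filter.mp hs).2
          have hsn0 : s + n ≠ 0 := by
            intro h
            exact hsn (neg_eq_of_add_eq_zero_left h).symm
          rw [hb, Stmt19Aux.kernel_abs p L₂ (s + n) hsn0]
      _ = ∑ t ∈ T.image (· + n), ‖Stmt19Aux.G p L₂ t‖ ^ 2 := by
          rw [sum_image]
          intro x _ y _ h
          exact add_right_cancel h
      _ ≤ ∑ t : ZMod p, ‖Stmt19Aux.G p L₂ t‖ ^ 2 :=
          sum_le_sum_of_subset_of_nonneg (subset_univ _) (fun _ _ _ => sq_nonneg _)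
      _ = (p : ℝ) * L₂ := Stmt19Aux.parseval p L₂ hL₂le
  have hCS : (∑ s ∈ T, a s * b s) ^ 2 ≤ ((p : ℝ) * L₁) * ((p : ℝ) * L₂) := by
    refine le_trans (sum_mul_sq_le_sq_mul_sq T a b) ?_
    have h1 : (0 : ℝ) ≤ ∑ s ∈ T, b s ^ 2 := sum_nonneg fun _ _ => sq_nonneg _
    have h2 : (0 : ℝ) ≤ ∑ s ∈ T, a s ^ 2 := sum_nonneg fun _ _ => sq_nonneg _
    exact mul_le_mul hA hB h1 (by positivity)
  have hS0 : (0 : ℝ) ≤ ∑ s ∈ T, a s * b s :=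
    sum_nonneg fun s _ => mul_nonneg (abs_nonneg _) (abs_nonneg _)
  have hRHS0 : (0 : ℝ) ≤ (p : ℝ) * Real.sqrt ((L₁ : ℝ) * L₂) := by positivity
  have hsqRHS : ((p : ℝ) * Real.sqrt ((L₁ : ℝ) * L₂)) ^ 2 = ((p : ℝ) * L₁) * ((p : ℝ) * L₂) := by
    rw [mul_pow, Real.sq_sqrt (by positivity)]
    ring
  constructor
  · have := Real.sqrt_le_sqrt (hCS.trans_eq hsqRHS.symm)
    rwa [Real.sqrt_sq hS0, Real.sqrt_sq hRHS0] at this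
  · have hLL : (L₁ : ℝ) * L₂ ≤ p := by
      calc (L₁ : ℝ) * L₂ ≤ Real.sqrt p * Real.sqrt p :=
            mul_le_mul hL₁p hL₂p (by positivity) (Real.sqrt_nonneg _)
        _ = p := Real.mul_self_sqrt hppos.le
    have h2 : Real.sqrt ((L₁ : ℝ) * L₂) ≤ Real.sqrt p := Real.sqrt_le_sqrt hLL
    have h3 : (p : ℝ) ^ ((3 : ℝ) / 2) = p * Real.sqrt p := by
      rw [Real.sqrt_eq_rpow, show (3 : ℝ) / 2 = 1 + 1 / 2 by norm_num,
        Real.rpow_add hppos, Real.rpow_one]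
    rw [h3]
    exact mul_le_mul_of_nonneg_left h2 hppos.le
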